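/- For every threshold graph G, the minimum size of a set of edges intersecting every triangle of G is at most twice the maximum size of a family of pairwise edge-disjoint triangles of G (i.e., Tuza's conjecture holds for threshold graphs). -/

import Mathlib

open Finset

/-- A triangle in `G`: a 3-element vertex set that is a clique. -/
def IsTriangle {V : Type*} (G : SimpleGraph V) (t : Finset V) : Prop :=
  t.card = 3 ∧ G.IsClique ↑t

/-- A triangle packing: a family of pairwise edge-disjoint triangles. -/
def IsTrianglePacking {V : Type*} [DecidableEq V] (G : SimpleGraph V)
    (P : Finset (Finset V)) : Prop :=
  (∀ t ∈ P, IsTriangle G t) ∧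
    ∀ t₁ ∈ P, ∀ t₂ ∈ P, t₁ ≠ t₂ → (t₁ ∩ t₂).card ≤ 1

/-- A triangle hitting set: a set of edges of `G` meeting every triangle of `G`. -/
def IsTriangleHitting {V : Type*} [Fintype V] [DecidableEq V] (G : SimpleGraph V)
    [DecidableRel G.Adj] (H : Finset (Sym2 V)) : Prop :=
  H ⊆ G.edgeFinset ∧
    ∀ t : Finset V, IsTriangle G t → ∃ e ∈ H, ∀ v ∈ e, v ∈ t

/-- The minimum size of a triangle hitting set, `τ(G)`. -/
noncomputable def triTau {V : Type*} [Fintype V] [DecidableEq V] (G : SimpleGraph V)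
    [DecidableRel G.Adj] : ℕ :=
  sInf {n | ∃ H : Finset (Sym2 V), IsTriangleHitting G H ∧ H.card = n}

/-- The maximum size of a triangle packing, `μ(G)`. -/
noncomputable def triMu {V : Type*} [Fintype V] [DecidableEq V] (G : SimpleGraph V) : ℕ :=
  sSup {n | ∃ P : Finset (Finset V), IsTrianglePacking G P ∧ P.card = n}

/-- A set of edges forming a matching (pairwise vertex-disjoint edges). -/
def IsMatchingSet {V : Type*} (M : Finset (Sym2 V)) : Prop :=
  ∀ e₁ ∈ M, ∀ e₂ ∈ M, e₁ ≠ e₂ → ∀ v : V, v ∈ e₁ → v ∉ e₂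

/-- A threshold representation of a graph `G`: the `c i` form a clique with nested
closed neighbourhoods, the `u j` form an independent set with nested neighbourhoods,
and together they partition the vertex set. -/
structure ThresholdRep {V : Type*} (G : SimpleGraph V) where
  k : ℕ
  s : ℕ
  c : Fin k → V
  u : Fin s → V
  inj_c : Function.Injective c
  inj_u : Function.Injective u
  disj : ∀ i j, c i ≠ u j
  cover : ∀ v : V, (∃ i, v = c i) ∨ (∃ j, v = u j)
  clique : ∀ i j, i ≠ j → G.Adj (c i) (c j)
  indep : ∀ i j, ¬ G.Adj (u i) (u j)
  nestedK : ∀ (i : Fin k) (h : i.val + 1 < k),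
    (insert (c ⟨i.val + 1, h⟩) (G.neighborSet (c ⟨i.val + 1, h⟩)) : Set V) ⊆
      insert (c i) (G.neighborSet (c i))
  nestedS : ∀ (j : Fin s) (h : j.val + 1 < s),
    G.neighborSet (u j) ⊆ G.neighborSet (u ⟨j.val + 1, h⟩)

/-- A co-chain representation of a graph `G`: two cliques `c` and `d` partitioning the
vertex set, with nested closed neighbourhoods along each ordering. -/
structure CoChainRep {V : Type*} (G : SimpleGraph V) where
  n : ℕ
  m : ℕ
  c : Fin n → V
  d : Fin m → V
  inj_c : Function.Injective c
  inj_d : Function.Injective d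
  disj : ∀ i j, c i ≠ d j
  cover : ∀ v : V, (∃ i, v = c i) ∨ (∃ j, v = d j)
  clique1 : ∀ i j, i ≠ j → G.Adj (c i) (c j)
  clique2 : ∀ i j, i ≠ j → G.Adj (d i) (d j)
  nested1 : ∀ (i : Fin n) (h : i.val + 1 < n),
    (insert (c ⟨i.val + 1, h⟩) (G.neighborSet (c ⟨i.val + 1, h⟩)) : Set V) ⊆
      insert (c i) (G.neighborSet (c i))
  nested2 : ∀ (i : Fin m) (h : i.val + 1 < m),
    (insert (d i) (G.neighborSet (d i)) : Set V) ⊆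
      insert (d ⟨i.val + 1, h⟩) (G.neighborSet (d ⟨i.val + 1, h⟩))

set_option linter.unusedSectionVars false
namespace TuzaAux

open Finset

variable {V : Type*} [Fintype V] [DecidableEq V] {G : SimpleGraph V} [DecidableRel G.Adj]

/-- neighbour indices of `u j` among the clique. -/
def nbrs (R : ThresholdRep G) (j : Fin R.s) : Finset (Fin R.k) :=
  univ.filter (fun i => G.Adj (R.u j) (R.c i))

def deg (R : ThresholdRep G) (j : Fin R.s) : ℕ := (nbrs R j).card

lemma adj_step (R : ThresholdRep G) (j : Fin R.s) (i : ℕ) (h : i + 1 < R.k)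
    (hadj : G.Adj (R.u j) (R.c ⟨i + 1, h⟩)) : G.Adj (R.u j) (R.c ⟨i, by omega⟩) := by
  have := R.nestedK ⟨i, by omega⟩ h
  have hmem : (R.u j) ∈ (insert (R.c ⟨i+1, h⟩) (G.neighborSet (R.c ⟨i+1, h⟩)) : Set V) :=
    Set.mem_insert_of_mem _ hadj.symm
  have h2 := this hmem
  rcases h2 with h2 | h2
  · exact absurd h2.symm (R.disj _ _)
  · exact h2.symm

lemma adj_down_aux (R : ThresholdRep G) (j : Fin R.s) (i' : Fin R.k) :
    ∀ (n : ℕ) (h : i'.val + n < R.k),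
      G.Adj (R.u j) (R.c ⟨i'.val + n, h⟩) → G.Adj (R.u j) (R.c i') := by
  intro n
  induction n with
  | zero =>
    intro h hadj
    have : (⟨i'.val + 0, h⟩ : Fin R.k) = i' := Fin.ext (by simp)
    rwa [this] at hadj
  | succ n ih =>
    intro h hadj
    have h1 : i'.val + n + 1 < R.k := by omega
    have : (⟨i'.val + (n+1), h⟩ : Fin R.k) = ⟨(i'.val + n) + 1, h1⟩ := Fin.ext (by simp [Nat.add_assoc])
    rw [this] at hadj
    have := adj_step R j (i'.val + n) h1 hadj
    exact ih (by omega) this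

lemma adj_down (R : ThresholdRep G) (j : Fin R.s) (i i' : Fin R.k)
    (hle : i'.val ≤ i.val) (hadj : G.Adj (R.u j) (R.c i)) : G.Adj (R.u j) (R.c i') := by
  have h : i'.val + (i.val - i'.val) < R.k := by have := i.isLt; omega
  apply adj_down_aux R j i' (i.val - i'.val) h
  have : (⟨i'.val + (i.val - i'.val), h⟩ : Fin R.k) = i := Fin.ext (by simp; omega)
  rwa [this]

lemma count_fin_lt (k v : ℕ) (hv : v ≤ k) :
    ((univ : Finset (Fin k)).filter (fun x => x.val < v)).card = v := by
  have : ((univ : Finset (Fin k)).filter (fun x => x.val < v)) =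
      (Finset.range v).attachFin (fun m hm => lt_of_lt_of_le (mem_range.mp hm) hv) := by
    ext i
    simp [Finset.mem_attachFin]
  rw [this, Finset.card_attachFin, Finset.card_range]

lemma adj_iff (R : ThresholdRep G) (j : Fin R.s) (i : Fin R.k) :
    G.Adj (R.u j) (R.c i) ↔ i.val < deg R j := by
  constructor
  · intro h
    have hsub : ((univ : Finset (Fin R.k)).filter (fun x => x.val ≤ i.val)) ⊆ nbrs R j := by
      intro x hx
      simp only [mem_filter, mem_univ, true_and] at hx
      exact mem_filter.mpr ⟨mem_univ _, adj_down R j i x hx h⟩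
    have hc : ((univ : Finset (Fin R.k)).filter (fun x => x.val ≤ i.val)).card = i.val + 1 := by
      have := count_fin_lt R.k (i.val + 1) i.isLt
      rw [← this]
      congr 1
      ext x; simp [Nat.lt_succ_iff]
    have := Finset.card_le_card hsub
    rw [hc] at this
    simpa [deg] using this
  · intro h
    by_contra hadj
    have hsub : nbrs R j ⊆ ((univ : Finset (Fin R.k)).filter (fun x => x.val < i.val)) := by
      intro x hx
      simp only [nbrs, mem_filter, mem_univ, true_and] at hx ⊢
      by_contra hxi
      exact hadj (adj_down R j x i (by omega) hx)
    have := Finset.card_le_card hsub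
    rw [count_fin_lt R.k i.val (le_of_lt i.isLt)] at this
    have hle2 : deg R j ≤ i.val := by simpa [deg] using this
    omega

end TuzaAux

namespace TuzaAux

open Finset

/-- number of pairs i<j in range n -/
def pc (n : ℕ) : ℕ := ∑ i ∈ Finset.range n, i

lemma pc_succ (n : ℕ) : pc (n+1) = pc n + n := Finset.sum_range_succ _ n

lemma pc_mono : Monotone pc := by
  intro x y h
  induction y with
  | zero => simp at h; simp [h]
  | succ n ih =>
    rcases Nat.lt_or_ge x (n+1) with h1 | h1
    · have := ih (by omega)
      rw [pc_succ]; omega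
    · have : x = n + 1 := by omega
      rw [this]

lemma pc_add (x m : ℕ) : pc x + x * m ≤ pc (x + m) := by
  induction m with
  | zero => simp
  | succ n ih =>
    have : x + (n+1) = (x + n) + 1 := by omega
    rw [this, pc_succ]
    have : x * (n+1) = x * n + x := by ring
    omega

/-- pairs (p,q) with p < q < n, as naturals -/
def Np (n : ℕ) : Finset (ℕ × ℕ) :=
  ((Finset.range n) ×ˢ (Finset.range n)).filter (fun pq => pq.1 < pq.2)

lemma Np_card (n : ℕ) : (Np n).card = pc n := by
  induction n with
  | zero => simp [Np, pc]
  | succ n ih =>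
    have hsplit : Np (n+1) = Np n ∪ (Finset.range n).image (fun x => (x, n)) := by
      ext pq
      simp only [Np, mem_union, mem_filter, mem_product, mem_range, mem_image]
      constructor
      · rintro ⟨⟨h1, h2⟩, h3⟩
        rcases Nat.lt_or_ge pq.2 n with h4 | h4
        · exact Or.inl ⟨⟨by omega, h4⟩, h3⟩
        · right
          exact ⟨pq.1, by omega, by have : pq.2 = n := by omega
                                    rw [← this]⟩
      · rintro (⟨⟨h1, h2⟩, h3⟩ | ⟨x, hx, hEq⟩)
        · exact ⟨⟨by omega, by omega⟩, h3⟩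
        · rw [← hEq]; simp; omega
    have hdisj : Disjoint (Np n) ((Finset.range n).image (fun x => (x, n))) := by
      rw [Finset.disjoint_left]
      rintro pq hpq hmem
      simp only [mem_image, mem_range] at hmem
      obtain ⟨x, hx, hEq⟩ := hmem
      simp only [Np, mem_filter, mem_product, mem_range] at hpq
      rw [← hEq] at hpq
      omega
    rw [hsplit, Finset.card_union_of_disjoint hdisj, ih,
      Finset.card_image_of_injective _ (fun x y h => by simpa using congrArg Prod.fst h),
      Finset.card_range, pc_succ]

variable {V : Type*} [Fintype V] [DecidableEq V] {G : SimpleGraph V} [DecidableRel G.Adj]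

def Ap (R : ThresholdRep G) (a : ℕ) : Finset (Fin R.k × Fin R.k) :=
  (univ ×ˢ univ).filter (fun pq => pq.1 < pq.2 ∧ pq.2.val < a)

def Bp (R : ThresholdRep G) (a : ℕ) : Finset (Fin R.k × Fin R.k) :=
  (univ ×ˢ univ).filter (fun pq => pq.1 < pq.2 ∧ a ≤ pq.1.val)

def Cp (R : ThresholdRep G) (a : ℕ) : Finset (Fin R.k × Fin R.s) :=
  (univ ×ˢ univ).filter (fun ij => a ≤ ij.1.val ∧ ij.1.val < deg R ij.2)

lemma Ap_card (R : ThresholdRep G) (a : ℕ) (ha : a ≤ R.k) : (Ap R a).card = pc a := by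
  rw [← Np_card]
  apply Finset.card_bij (fun pq _ => (pq.1.val, pq.2.val))
  · rintro pq hpq
    simp only [Ap, mem_filter, mem_product] at hpq
    simp only [Np, mem_filter, mem_product, mem_range]
    have := hpq.2
    exact ⟨⟨by omega, by omega⟩, by exact_mod_cast this.1⟩
  · rintro pq hpq pq' hpq' hEq
    simp only [Prod.mk.injEq] at hEq
    exact Prod.ext (Fin.ext hEq.1) (Fin.ext hEq.2)
  · rintro pq hpq
    simp only [Np, mem_filter, mem_product, mem_range] at hpq
    refine ⟨(⟨pq.1, by omega⟩, ⟨pq.2, by omega⟩), ?_, rfl⟩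
    simp only [Ap, mem_filter, mem_product, mem_univ, and_self, true_and]
    exact ⟨hpq.2, by simpa using hpq.1.2⟩

lemma Bp_card_le (R : ThresholdRep G) (a : ℕ) : (Bp R a).card ≤ pc (R.k - a) := by
  rw [← Np_card]
  apply Finset.card_le_card_of_injOn (fun pq => (pq.1.val - a, pq.2.val - a))
  · rintro pq hpq
    simp only [Bp, mem_coe, mem_filter, mem_product] at hpq
    simp only [Np, mem_coe, mem_filter, mem_product, mem_range]
    have h1 := hpq.2.1
    have h2 := hpq.2.2
    have h3 := pq.1.isLt
    have h4 := pq.2.isLt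
    have h5 : pq.1.val < pq.2.val := h1
    exact ⟨⟨by omega, by omega⟩, by omega⟩
  · rintro pq hpq pq' hpq' hEq
    simp only [Bp, mem_coe, mem_filter, mem_product] at hpq hpq'
    simp only [Prod.mk.injEq] at hEq
    have h1 : pq.1.val < pq.2.val := hpq.2.1
    have h1' : pq'.1.val < pq'.2.val := hpq'.2.1
    have := hpq.2.2
    have := hpq'.2.2
    exact Prod.ext (Fin.ext (by omega)) (Fin.ext (by omega))

lemma Cp_card_le (R : ThresholdRep G) (h : ℕ) :
    (Cp R h).card ≤ (R.k - h) * ((univ : Finset (Fin R.s)).filter (fun j => h + 1 ≤ deg R j)).card := by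
  have : (Cp R h).card ≤ ((Finset.range (R.k - h)) ×ˢ ((univ : Finset (Fin R.s)).filter (fun j => h + 1 ≤ deg R j))).card := by
    apply Finset.card_le_card_of_injOn (fun ij => (ij.1.val - h, ij.2))
    · rintro ij hij
      simp only [Cp, mem_coe, mem_filter, mem_product] at hij
      simp only [mem_coe, mem_product, mem_range, mem_filter, mem_univ, true_and]
      have h3 := ij.1.isLt
      exact ⟨by omega, by omega⟩
    · rintro ij hij ij' hij' hEq
      simp only [Cp, mem_coe, mem_filter, mem_product] at hij hij'
      simp only [Prod.mk.injEq] at hEq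
      have := hij.2.1
      have := hij'.2.1
      exact Prod.ext (Fin.ext (by omega)) hEq.2
  simpa [Finset.card_product] using this

end TuzaAux

namespace TuzaAux

open Finset

variable {V : Type*} [Fintype V] [DecidableEq V] {G : SimpleGraph V} [DecidableRel G.Adj]

def hset (R : ThresholdRep G) (a : ℕ) : Finset (Sym2 V) :=
  ((Ap R a).image (fun pq => s(R.c pq.1, R.c pq.2))) ∪
  ((Bp R a).image (fun pq => s(R.c pq.1, R.c pq.2))) ∪
  ((Cp R a).image (fun ij => s(R.c ij.1, R.u ij.2)))

lemma hset_card_le (R : ThresholdRep G) (a : ℕ) :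
    (hset R a).card ≤ (Ap R a).card + (Bp R a).card + (Cp R a).card := by
  calc (hset R a).card ≤ (((Ap R a).image (fun pq => s(R.c pq.1, R.c pq.2))) ∪
      ((Bp R a).image (fun pq => s(R.c pq.1, R.c pq.2)))).card +
      ((Cp R a).image (fun ij => s(R.c ij.1, R.u ij.2))).card := Finset.card_union_le _ _
    _ ≤ (((Ap R a).image (fun pq => s(R.c pq.1, R.c pq.2))).card +
        ((Bp R a).image (fun pq => s(R.c pq.1, R.c pq.2))).card) +
        ((Cp R a).image (fun ij => s(R.c ij.1, R.u ij.2))).card := by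
        have := Finset.card_union_le ((Ap R a).image (fun pq => s(R.c pq.1, R.c pq.2)))
          ((Bp R a).image (fun pq => s(R.c pq.1, R.c pq.2)))
        omega
    _ ≤ (Ap R a).card + (Bp R a).card + (Cp R a).card := by
        have h1 := Finset.card_image_le (s := Ap R a) (f := fun pq => s(R.c pq.1, R.c pq.2))
        have h2 := Finset.card_image_le (s := Bp R a) (f := fun pq => s(R.c pq.1, R.c pq.2))
        have h3 := Finset.card_image_le (s := Cp R a) (f := fun ij => s(R.c ij.1, R.u ij.2))
        omega

lemma hset_subset (R : ThresholdRep G) (a : ℕ) : hset R a ⊆ G.edgeFinset := by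
  intro e he
  simp only [hset, mem_union, mem_image] at he
  rw [SimpleGraph.mem_edgeFinset]
  rcases he with (⟨pq, hpq, rfl⟩ | ⟨pq, hpq, rfl⟩) | ⟨ij, hij, rfl⟩
  · simp only [Ap, mem_filter, mem_product] at hpq
    exact R.clique _ _ (ne_of_lt hpq.2.1)
  · simp only [Bp, mem_filter, mem_product] at hpq
    exact R.clique _ _ (ne_of_lt hpq.2.1)
  · simp only [Cp, mem_filter, mem_product] at hij
    exact ((adj_iff R ij.2 ij.1).mpr hij.2.2).symm

lemma hit_cc (R : ThresholdRep G) (a : ℕ) (t : Finset V) (p q : Fin R.k) (hne : p ≠ q)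
    (hp : R.c p ∈ t) (hq : R.c q ∈ t)
    (hcase : (p.val < a ∧ q.val < a) ∨ (a ≤ p.val ∧ a ≤ q.val)) :
    ∃ e ∈ hset R a, ∀ v ∈ e, v ∈ t := by
  obtain ⟨p', q', hlt, hp', hq', hcase'⟩ :
      ∃ p' q' : Fin R.k, p' < q' ∧ R.c p' ∈ t ∧ R.c q' ∈ t ∧
        ((p'.val < a ∧ q'.val < a) ∨ (a ≤ p'.val ∧ a ≤ q'.val)) := by
    rcases lt_or_gt_of_ne hne with h | h
    · exact ⟨p, q, h, hp, hq, hcase⟩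
    · exact ⟨q, p, h, hq, hp, by tauto⟩
  refine ⟨s(R.c p', R.c q'), ?_, ?_⟩
  · simp only [hset, mem_union, mem_image]
    rcases hcase' with ⟨h1, h2⟩ | ⟨h1, h2⟩
    · exact Or.inl (Or.inl ⟨(p', q'), by simp [Ap, hlt, h2], rfl⟩)
    · exact Or.inl (Or.inr ⟨(p', q'), by simp [Bp, hlt, h1], rfl⟩)
  · intro v hv
    rcases Sym2.mem_iff.mp hv with rfl | rfl <;> assumption

lemma hset_hitting (R : ThresholdRep G) (a : ℕ) : IsTriangleHitting G (hset R a) := by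
  refine ⟨hset_subset R a, ?_⟩
  rintro t ⟨hcard, hclq⟩
  have hadj : ∀ v ∈ t, ∀ w ∈ t, v ≠ w → G.Adj v w := fun v hv w hw hne =>
    hclq (Finset.mem_coe.mpr hv) (Finset.mem_coe.mpr hw) hne
  obtain ⟨x, y, z, hxy, hxz, hyz, rfl⟩ := Finset.card_eq_three.mp hcard
  have hxt : x ∈ ({x, y, z} : Finset V) := by simp
  have hyt : y ∈ ({x, y, z} : Finset V) := by simp
  have hzt : z ∈ ({x, y, z} : Finset V) := by simp
  -- two clique vertices
  have key : ∃ p q : Fin R.k, p ≠ q ∧ R.c p ∈ ({x, y, z} : Finset V) ∧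
      R.c q ∈ ({x, y, z} : Finset V) := by
    have noUU : ∀ (v w : V), v ∈ ({x, y, z} : Finset V) → w ∈ ({x, y, z} : Finset V) →
        v ≠ w → (∃ jv, v = R.u jv) → (∃ jw, w = R.u jw) → False := by
      rintro v w hv hw hvw ⟨jv, rfl⟩ ⟨jw, rfl⟩
      exact R.indep jv jw (hadj _ hv _ hw hvw)
    have cne : ∀ (p q : Fin R.k), R.c p = x → R.c q = y → p ≠ q := by
      rintro p q rfl rfl h; exact hxy (by rw [h])
    have cne2 : ∀ (p q : Fin R.k), R.c p = x → R.c q = z → p ≠ q := by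
      rintro p q rfl rfl h; exact hxz (by rw [h])
    have cne3 : ∀ (p q : Fin R.k), R.c p = y → R.c q = z → p ≠ q := by
      rintro p q rfl rfl h; exact hyz (by rw [h])
    rcases R.cover x with ⟨p, hp⟩ | hx <;> rcases R.cover y with ⟨q, hq⟩ | hy <;>
      rcases R.cover z with ⟨r, hr⟩ | hz
    · exact ⟨p, q, cne p q hp.symm hq.symm, by rw [← hp]; exact hxt, by rw [← hq]; exact hyt⟩
    · exact ⟨p, q, cne p q hp.symm hq.symm, by rw [← hp]; exact hxt, by rw [← hq]; exact hyt⟩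
    · exact ⟨p, r, cne2 p r hp.symm hr.symm, by rw [← hp]; exact hxt, by rw [← hr]; exact hzt⟩
    · exact (noUU y z hyt hzt hyz hy hz).elim
    · exact ⟨q, r, cne3 q r hq.symm hr.symm, by rw [← hq]; exact hyt, by rw [← hr]; exact hzt⟩
    · exact (noUU x z hxt hzt hxz hx hz).elim
    · exact (noUU x y hxt hyt hxy hx hy).elim
    · exact (noUU x y hxt hyt hxy hx hy).elim
  obtain ⟨p, q, hpq, hpt, hqt⟩ := key
  set t : Finset V := {x, y, z} with ht
  by_cases hc1 : p.val < a ∧ q.val < a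
  · exact hit_cc R a t p q hpq hpt hqt (Or.inl hc1)
  by_cases hc2 : a ≤ p.val ∧ a ≤ q.val
  · exact hit_cc R a t p q hpq hpt hqt (Or.inr hc2)
  -- one below, one above; rename so that plo < a ≤ qhi
  obtain ⟨plo, qhi, hlo, hhi, hplo, hqhi⟩ :
      ∃ plo qhi : Fin R.k, plo.val < a ∧ a ≤ qhi.val ∧ R.c plo ∈ t ∧ R.c qhi ∈ t := by
    rcases Nat.lt_or_ge p.val a with h | h
    · rcases Nat.lt_or_ge q.val a with h' | h'
      · exact absurd ⟨h, h'⟩ hc1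
      · exact ⟨p, q, h, h', hpt, hqt⟩
    · rcases Nat.lt_or_ge q.val a with h' | h'
      · exact ⟨q, p, h', h, hqt, hpt⟩
      · exact absurd ⟨h, h'⟩ hc2
  have hlq : plo ≠ qhi := fun hEq => by rw [hEq] at hlo; omega
  -- third vertex
  have hsub : ({R.c plo, R.c qhi} : Finset V) ⊆ t := by
    intro v hv; rcases Finset.mem_insert.mp hv with rfl | hv
    · exact hplo
    · rw [Finset.mem_singleton.mp hv]; exact hqhi
  have hw : ∃ w ∈ t, w ≠ R.c plo ∧ w ≠ R.c qhi := by
    have hcard2 : ({R.c plo, R.c qhi} : Finset V).card ≤ 2 := Finset.card_insert_le _ _ |>.trans (by simp)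
    have : (t \ ({R.c plo, R.c qhi} : Finset V)).Nonempty := by
      rw [← Finset.card_pos, Finset.card_sdiff_of_subset hsub]
      have : t.card = 3 := hcard
      omega
    obtain ⟨w, hw⟩ := this
    rw [Finset.mem_sdiff] at hw
    refine ⟨w, hw.1, ?_, ?_⟩ <;> · intro hEq; apply hw.2; simp [hEq]
  obtain ⟨w, hwt, hw1, hw2⟩ := hw
  rcases R.cover w with ⟨r, hr⟩ | ⟨j, hj⟩
  · subst hr
    have hrp : r ≠ plo := fun hEq => hw1 (by rw [hEq])
    have hrq : r ≠ qhi := fun hEq => hw2 (by rw [hEq])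
    rcases Nat.lt_or_ge r.val a with h | h
    · exact hit_cc R a t r plo hrp hwt hplo (Or.inl ⟨h, hlo⟩)
    · exact hit_cc R a t r qhi hrq hwt hqhi (Or.inr ⟨h, hhi⟩)
  · subst hj
    have hadjqj : G.Adj (R.u j) (R.c qhi) := (hadj _ hwt _ hqhi (fun hEq => (R.disj qhi j) hEq.symm)).symm.symm
    have : G.Adj (R.u j) (R.c qhi) := hadjqj
    have hdeg : qhi.val < deg R j := (adj_iff R j qhi).mp ((hadj _ hqhi _ hwt (fun hEq => (R.disj qhi j) hEq)).symm)
    refine ⟨s(R.c qhi, R.u j), ?_, ?_⟩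
    · simp only [hset, mem_union, mem_image]
      exact Or.inr ⟨(qhi, j), by simp [Cp, hhi, hdeg], rfl⟩
    · intro v hv
      rcases Sym2.mem_iff.mp hv with rfl | rfl <;> assumption

end TuzaAux

namespace TuzaAux

open Finset

variable {V : Type*} [Fintype V] [DecidableEq V] {G : SimpleGraph V} [DecidableRel G.Adj]

def Jset (R : ThresholdRep G) (a : ℕ) : Finset (Fin R.s) :=
  univ.filter (fun j => a ≤ deg R j)

def NZ (R : ThresholdRep G) (a : ℕ) : ℕ := (R.k - a) + (Jset R a).card

def zeta (R : ThresholdRep G) (a : ℕ) (hk : 0 < R.k) (r : ℕ) : V :=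
  if h1 : r < R.k - a then R.c ⟨a + r, by omega⟩
  else if h2 : r - (R.k - a) < (Jset R a).card then
    R.u ((Jset R a).orderIsoOfFin rfl ⟨r - (R.k - a), h2⟩)
  else R.c ⟨0, hk⟩

lemma zeta_spec (R : ThresholdRep G) (a : ℕ) (hk : 0 < R.k) (r : ℕ) (hr : r < NZ R a) :
    (∃ i : Fin R.k, a ≤ i.val ∧ zeta R a hk r = R.c i) ∨
    (∃ j : Fin R.s, a ≤ deg R j ∧ zeta R a hk r = R.u j) := by
  unfold NZ at hr
  unfold zeta
  split_ifs with h1 h2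
  · exact Or.inl ⟨⟨a + r, by omega⟩, by simp, rfl⟩
  · refine Or.inr ⟨_, ?_, rfl⟩
    have hm := ((Jset R a).orderIsoOfFin rfl ⟨r - (R.k - a), h2⟩).2
    exact (mem_filter.mp hm).2
  · omega

lemma zeta_adj (R : ThresholdRep G) (a : ℕ) (hk : 0 < R.k) (r : ℕ) (hr : r < NZ R a)
    (p : Fin R.k) (hp : p.val < a) : G.Adj (zeta R a hk r) (R.c p) := by
  rcases zeta_spec R a hk r hr with ⟨i, hi, hEq⟩ | ⟨j, hj, hEq⟩
  · rw [hEq]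
    exact R.clique i p (Fin.ne_of_val_ne (by omega))
  · rw [hEq]
    exact (adj_iff R j p).mpr (by unfold deg at hj ⊢; omega)

lemma zeta_ne_c (R : ThresholdRep G) (a : ℕ) (hk : 0 < R.k) (r : ℕ) (hr : r < NZ R a)
    (p : Fin R.k) (hp : p.val < a) : zeta R a hk r ≠ R.c p :=
  (zeta_adj R a hk r hr p hp).ne

lemma zeta_inj (R : ThresholdRep G) (a : ℕ) (hk : 0 < R.k) {r r' : ℕ}
    (hr : r < NZ R a) (hr' : r' < NZ R a) (hne : r ≠ r') :
    zeta R a hk r ≠ zeta R a hk r' := by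
  unfold NZ at hr hr'
  by_cases c1 : r < R.k - a <;> by_cases c2 : r' < R.k - a
  · simp only [zeta, dif_pos c1, dif_pos c2]
    intro hEq
    have := R.inj_c hEq
    simp only [Fin.mk.injEq] at this
    omega
  · have c2' : r' - (R.k - a) < (Jset R a).card := by omega
    simp only [zeta, dif_neg c2, dif_pos c1, dif_pos c2']
    exact R.disj _ _
  · have c1' : r - (R.k - a) < (Jset R a).card := by omega
    simp only [zeta, dif_neg c1, dif_pos c2, dif_pos c1']
    exact (R.disj _ _).symm
  · have c1' : r - (R.k - a) < (Jset R a).card := by omega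
    have c2' : r' - (R.k - a) < (Jset R a).card := by omega
    simp only [zeta, dif_neg c1, dif_neg c2, dif_pos c1', dif_pos c2']
    intro hEq
    have h3 := R.inj_u hEq
    have h4 := ((Jset R a).orderIsoOfFin rfl).injective (Subtype.ext h3)
    simp only [Fin.mk.injEq] at h4
    omega

def cIdx (a : ℕ) {k : ℕ} (pq : Fin k × Fin k) : ℕ :=
  if (pq.1.val + pq.2.val) % a = 0 then a - 1 else (pq.1.val + pq.2.val) % a - 1

lemma cIdx_lt (a : ℕ) (ha : 0 < a) {k : ℕ} (pq : Fin k × Fin k) : cIdx a pq < a := by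
  unfold cIdx
  have := Nat.mod_lt (pq.1.val + pq.2.val) ha
  split_ifs <;> omega

lemma resid_inj (a : ℕ) {w x y : ℕ} (hx : x < a) (hy : y < a)
    (h : (w + x) % a = (w + y) % a) : x = y := by
  have h1 : (w + x) ≡ (w + y) [MOD a] := h
  have h2 : x ≡ y [MOD a] := Nat.ModEq.add_left_cancel' w h1
  calc x = x % a := (Nat.mod_eq_of_lt hx).symm
    _ = y % a := h2
    _ = y := Nat.mod_eq_of_lt hy

lemma pair_eq {k : ℕ} (pq pq' : Fin k × Fin k) (h : pq.1 < pq.2) (h' : pq'.1 < pq'.2)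
    (h1 : pq.1 = pq'.1 ∨ pq.1 = pq'.2) (h2 : pq.2 = pq'.1 ∨ pq.2 = pq'.2) : pq = pq' := by
  have hv : pq.1.val < pq.2.val := h
  have hv' : pq'.1.val < pq'.2.val := h'
  rcases h1 with h1 | h1 <;> rcases h2 with h2 | h2 <;>
    · have e1 := congrArg Fin.val h1
      have e2 := congrArg Fin.val h2
      exact Prod.ext (Fin.ext (by omega)) (Fin.ext (by omega))

lemma pair_inter {k : ℕ} (pq pq' : Fin k × Fin k) (h : pq.1 < pq.2) (h' : pq'.1 < pq'.2)
    (hne : pq ≠ pq') (α γ : Fin k)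
    (hα : α = pq.1 ∨ α = pq.2) (hα' : α = pq'.1 ∨ α = pq'.2)
    (hγ : γ = pq.1 ∨ γ = pq.2) (hγ' : γ = pq'.1 ∨ γ = pq'.2) : α = γ := by
  by_contra hne2
  rcases hα with rfl | rfl <;> rcases hγ with rfl | rfl
  · exact hne2 rfl
  · exact hne (pair_eq pq pq' h h' hα' hγ')
  · exact hne (pair_eq pq pq' h h' hγ' hα')
  · exact hne2 rfl

/-- same color index implies same residue -/
lemma cIdx_resid (a : ℕ) {k : ℕ} (pq pq' : Fin k × Fin k)
    (hcol : cIdx a pq = cIdx a pq') (ha : 0 < a) :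
    (pq.1.val + pq.2.val) % a = (pq'.1.val + pq'.2.val) % a := by
  unfold cIdx at hcol
  have m1 : (pq.1.val + pq.2.val) % a < a := Nat.mod_lt _ ha
  have m2 : (pq'.1.val + pq'.2.val) % a < a := Nat.mod_lt _ ha
  split_ifs at hcol with u1 u2 u3 <;> omega

lemma resid_ne (a p q p' q' : ℕ) (h1 : p < q) (h2 : q < a) (h1' : p' < q') (h2' : q' < a)
    (hres : (p + q) % a = (p' + q') % a) (hne : ¬(p = p' ∧ q = q')) :
    p ≠ p' ∧ p ≠ q' ∧ q ≠ p' ∧ q ≠ q' := by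
  refine ⟨?_, ?_, ?_, ?_⟩
  · rintro rfl
    have := resid_inj a (x := q) (y := q') (by omega) (by omega) hres
    exact hne ⟨rfl, this⟩
  · rintro rfl
    rw [Nat.add_comm p' p] at hres
    have := resid_inj a (x := q) (y := p') (by omega) (by omega) hres
    omega
  · rintro rfl
    rw [Nat.add_comm p q] at hres
    have := resid_inj a (x := p) (y := q') (by omega) (by omega) hres
    omega
  · rintro rfl
    rw [Nat.add_comm p q, Nat.add_comm p' q] at hres
    have := resid_inj a (x := p) (y := p') (by omega) (by omega) hres
    exact hne ⟨this, rfl⟩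

/-- two distinct properly-coloured pairs with the same colour share no index -/
lemma same_color_disj (a : ℕ) {k : ℕ} (pq pq' : Fin k × Fin k)
    (h : pq.1 < pq.2) (ha2 : pq.2.val < a) (h' : pq'.1 < pq'.2) (ha2' : pq'.2.val < a)
    (hne : pq ≠ pq') (hcol : cIdx a pq = cIdx a pq') :
    pq.1 ≠ pq'.1 ∧ pq.1 ≠ pq'.2 ∧ pq.2 ≠ pq'.1 ∧ pq.2 ≠ pq'.2 := by
  have hv : pq.1.val < pq.2.val := h
  have hv' : pq'.1.val < pq'.2.val := h'
  have ha : 0 < a := by omega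
  have hres := cIdx_resid a pq pq' hcol ha
  have hne2 : ¬(pq.1.val = pq'.1.val ∧ pq.2.val = pq'.2.val) := by
    rintro ⟨e1, e2⟩
    exact hne (Prod.ext (Fin.ext e1) (Fin.ext e2))
  have := resid_ne a pq.1.val pq.2.val pq'.1.val pq'.2.val hv ha2 hv' ha2' hres hne2
  refine ⟨?_, ?_, ?_, ?_⟩ <;> · intro hEq; have := congrArg Fin.val hEq; tauto

end TuzaAux

namespace TuzaAux

open Finset

variable {V : Type*} [Fintype V] [DecidableEq V] {G : SimpleGraph V} [DecidableRel G.Adj]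

def Qset (R : ThresholdRep G) (a N : ℕ) : Finset (Fin R.k × Fin R.k) :=
  (Ap R a).filter (fun pq => cIdx a pq < N)

def tri (R : ThresholdRep G) (a : ℕ) (hk : 0 < R.k) (pq : Fin R.k × Fin R.k) : Finset V :=
  {R.c pq.1, R.c pq.2, zeta R a hk (cIdx a pq)}

lemma Qset_mem {R : ThresholdRep G} {a N : ℕ} {pq : Fin R.k × Fin R.k}
    (h : pq ∈ Qset R a N) : pq.1 < pq.2 ∧ pq.2.val < a ∧ cIdx a pq < N := by
  simp only [Qset, Ap, mem_filter, mem_product] at h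
  exact ⟨h.1.2.1, h.1.2.2, h.2⟩

lemma tri_isTriangle (R : ThresholdRep G) (a N : ℕ) (hk : 0 < R.k) (hN : N ≤ NZ R a)
    {pq : Fin R.k × Fin R.k} (hpq : pq ∈ Qset R a N) : IsTriangle G (tri R a hk pq) := by
  obtain ⟨h1, h2, h3⟩ := Qset_mem hpq
  have hrz : cIdx a pq < NZ R a := by omega
  have hp1 : pq.1.val < a := by have : pq.1.val < pq.2.val := h1; omega
  have hc12 : R.c pq.1 ≠ R.c pq.2 := fun hEq => (ne_of_lt h1) (R.inj_c hEq)
  have hz1 : zeta R a hk (cIdx a pq) ≠ R.c pq.1 := zeta_ne_c R a hk _ hrz _ hp1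
  have hz2 : zeta R a hk (cIdx a pq) ≠ R.c pq.2 := zeta_ne_c R a hk _ hrz _ h2
  constructor
  · rw [tri, Finset.card_insert_of_notMem (by simp [hc12, hz1.symm]),
      Finset.card_insert_of_notMem (by simp [hz2.symm]), Finset.card_singleton]
  · intro v hv w hw hvw
    simp only [tri, coe_insert, Set.mem_insert_iff, coe_singleton, Set.mem_singleton_iff] at hv hw
    have hadjz1 : G.Adj (zeta R a hk (cIdx a pq)) (R.c pq.1) := zeta_adj R a hk _ hrz _ hp1
    have hadjz2 : G.Adj (zeta R a hk (cIdx a pq)) (R.c pq.2) := zeta_adj R a hk _ hrz _ h2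
    have hadj12 : G.Adj (R.c pq.1) (R.c pq.2) := R.clique _ _ (ne_of_lt h1)
    rcases hv with rfl | rfl | rfl <;> rcases hw with rfl | rfl | rfl <;>
      first
        | exact absurd rfl hvw
        | exact hadj12
        | exact hadj12.symm
        | exact hadjz1
        | exact hadjz1.symm
        | exact hadjz2
        | exact hadjz2.symm

def Pack (R : ThresholdRep G) (a N : ℕ) (hk : 0 < R.k) : Finset (Finset V) :=
  (Qset R a N).image (tri R a hk)

lemma tri_injOn (R : ThresholdRep G) (a N : ℕ) (hk : 0 < R.k) (hN : N ≤ NZ R a) :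
    Set.InjOn (tri R a hk) (Qset R a N) := by
  intro pq hpq pq' hpq' hEq
  obtain ⟨h1, h2, h3⟩ := Qset_mem (Finset.mem_coe.mp hpq)
  obtain ⟨h1', h2', h3'⟩ := Qset_mem (Finset.mem_coe.mp hpq')
  have hp1 : pq.1.val < a := by have : pq.1.val < pq.2.val := h1; omega
  have hp1' : pq'.1.val < a := by have : pq'.1.val < pq'.2.val := h1'; omega
  have hz' : ∀ p : Fin R.k, p.val < a → zeta R a hk (cIdx a pq') ≠ R.c p :=
    fun p hp => zeta_ne_c R a hk _ (by omega) _ hp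
  have mem1 : R.c pq.1 ∈ tri R a hk pq' := by
    rw [← hEq]; simp [tri]
  have mem2 : R.c pq.2 ∈ tri R a hk pq' := by
    rw [← hEq]; simp [tri]
  simp only [tri, Finset.mem_insert, Finset.mem_singleton] at mem1 mem2
  have d1 : pq.1 = pq'.1 ∨ pq.1 = pq'.2 := by
    rcases mem1 with h | h | h
    · exact Or.inl (R.inj_c h)
    · exact Or.inr (R.inj_c h)
    · exact absurd h.symm (hz' _ hp1)
  have d2 : pq.2 = pq'.1 ∨ pq.2 = pq'.2 := by
    rcases mem2 with h | h | h
    · exact Or.inl (R.inj_c h)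
    · exact Or.inr (R.inj_c h)
    · exact absurd h.symm (hz' _ h2)
  exact pair_eq pq pq' h1 h1' d1 d2

lemma Pack_card (R : ThresholdRep G) (a N : ℕ) (hk : 0 < R.k) (hN : N ≤ NZ R a) :
    (Pack R a N hk).card = (Qset R a N).card :=
  Finset.card_image_of_injOn (tri_injOn R a N hk hN)

lemma Pack_isPacking (R : ThresholdRep G) (a N : ℕ) (hk : 0 < R.k) (hN : N ≤ NZ R a) :
    IsTrianglePacking G (Pack R a N hk) := by
  constructor
  · intro t ht
    obtain ⟨pq, hpq, rfl⟩ := Finset.mem_image.mp ht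
    exact tri_isTriangle R a N hk hN hpq
  · intro t1 ht1 t2 ht2 hne
    obtain ⟨pq, hpq, rfl⟩ := Finset.mem_image.mp ht1
    obtain ⟨pq', hpq', rfl⟩ := Finset.mem_image.mp ht2
    have hpqne : pq ≠ pq' := fun hEq => hne (by rw [hEq])
    obtain ⟨h1, h2, h3⟩ := Qset_mem hpq
    obtain ⟨h1', h2', h3'⟩ := Qset_mem hpq'
    have hp1 : pq.1.val < a := by have : pq.1.val < pq.2.val := h1; omega
    have hp1' : pq'.1.val < a := by have : pq'.1.val < pq'.2.val := h1'; omega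
    have hrz : cIdx a pq < NZ R a := by omega
    have hrz' : cIdx a pq' < NZ R a := by omega
    rw [Finset.card_le_one]
    intro v hv w hw
    rw [Finset.mem_inter] at hv hw
    obtain ⟨hv1, hv2⟩ := hv
    obtain ⟨hw1, hw2⟩ := hw
    simp only [tri, Finset.mem_insert, Finset.mem_singleton] at hv1 hv2 hw1 hw2
    by_cases hcol : cIdx a pq = cIdx a pq'
    · -- same colour: pairs disjoint, so both v and w must equal the zeta vertex
      obtain ⟨n1, n2, n3, n4⟩ := same_color_disj a pq pq' h1 h2 h1' h2' hpqne hcol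
      have forced : ∀ x : V,
          (x = R.c pq.1 ∨ x = R.c pq.2 ∨ x = zeta R a hk (cIdx a pq)) →
          (x = R.c pq'.1 ∨ x = R.c pq'.2 ∨ x = zeta R a hk (cIdx a pq')) →
          x = zeta R a hk (cIdx a pq) := by
        rintro x (rfl | rfl | rfl) (hx' | hx' | hx')
        · exact absurd (R.inj_c hx') n1
        · exact absurd (R.inj_c hx') n2
        · rw [hx', hcol]
        · exact absurd (R.inj_c hx') n3
        · exact absurd (R.inj_c hx') n4
        · rw [hx', hcol]
        · exact absurd hx' (zeta_ne_c R a hk _ hrz _ hp1')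
        · exact absurd hx' (zeta_ne_c R a hk _ hrz _ h2')
        · rfl
      rw [forced v hv1 hv2, forced w hw1 hw2]
    · -- different colours: zeta vertices distinct; common vertices are clique vertices
      have hzz : zeta R a hk (cIdx a pq) ≠ zeta R a hk (cIdx a pq') :=
        zeta_inj R a hk hrz hrz' hcol
      have forced : ∀ x : V,
          (x = R.c pq.1 ∨ x = R.c pq.2 ∨ x = zeta R a hk (cIdx a pq)) →
          (x = R.c pq'.1 ∨ x = R.c pq'.2 ∨ x = zeta R a hk (cIdx a pq')) →
          ∃ α : Fin R.k, x = R.c α ∧ (α = pq.1 ∨ α = pq.2) ∧ (α = pq'.1 ∨ α = pq'.2) := by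
        rintro x (rfl | rfl | rfl) (hx' | hx' | hx')
        · exact ⟨pq.1, rfl, Or.inl rfl, Or.inl (R.inj_c hx')⟩
        · exact ⟨pq.1, rfl, Or.inl rfl, Or.inr (R.inj_c hx')⟩
        · exact absurd hx' (zeta_ne_c R a hk _ hrz' _ hp1).symm.elim
        · exact ⟨pq.2, rfl, Or.inr rfl, Or.inl (R.inj_c hx')⟩
        · exact ⟨pq.2, rfl, Or.inr rfl, Or.inr (R.inj_c hx')⟩
        · exact absurd hx' (zeta_ne_c R a hk _ hrz' _ h2).symm.elim
        · exact absurd hx' (zeta_ne_c R a hk _ hrz _ hp1')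
        · exact absurd hx' (zeta_ne_c R a hk _ hrz _ h2')
        · exact absurd hx' hzz
      obtain ⟨α, hxα, hα, hα'⟩ := forced v hv1 hv2
      obtain ⟨γ, hwγ, hγ, hγ'⟩ := forced w hw1 hw2
      rw [hxα, hwγ, pair_inter pq pq' h1 h1' hpqne α γ hα hα' hγ hγ']

end TuzaAux

namespace TuzaAux

open Finset

variable {V : Type*} [Fintype V] [DecidableEq V] {G : SimpleGraph V} [DecidableRel G.Adj]

lemma deg_le (R : ThresholdRep G) (j : Fin R.s) : deg R j ≤ R.k := by
  have := Finset.card_le_univ (nbrs R j)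
  simpa [deg] using this

lemma exists_good (R : ThresholdRep G) :
    ∃ (H : Finset (Sym2 V)) (P : Finset (Finset V)),
      IsTriangleHitting G H ∧ IsTrianglePacking G P ∧ H.card ≤ 2 * P.card := by
  classical
  have hPk : (Bp R R.k).card + (Cp R R.k).card ≤ (Ap R R.k).card := by
    have hB : Bp R R.k = ∅ := by
      rw [Finset.eq_empty_iff_forall_notMem]
      intro pq hpq
      simp only [Bp, mem_filter, mem_product] at hpq
      have h1 := pq.1.isLt
      have h2 := hpq.2.2
      omega
    have hC : Cp R R.k = ∅ := by
      rw [Finset.eq_empty_iff_forall_notMem]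
      intro ij hij
      simp only [Cp, mem_filter, mem_product] at hij
      have h1 := deg_le R ij.2
      have h2 := hij.2.1
      have h3 := hij.2.2
      omega
    simp [hB, hC]
  have hex : ∃ a, (Bp R a).card + (Cp R a).card ≤ (Ap R a).card := ⟨R.k, hPk⟩
  set a := Nat.find hex with hadef
  have ha : (Bp R a).card + (Cp R a).card ≤ (Ap R a).card := Nat.find_spec hex
  have hak : a ≤ R.k := Nat.find_min' hex hPk
  by_cases hk2 : R.k < 2
  · -- no pairs at all
    have hA : Ap R a = ∅ := by
      rw [Finset.eq_empty_iff_forall_notMem]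
      intro pq hpq
      simp only [Ap, mem_filter, mem_product] at hpq
      have h1 := pq.1.isLt
      have h2 := pq.2.isLt
      have h3 : pq.1.val < pq.2.val := hpq.2.1
      omega
    have hB : Bp R a = ∅ := by
      rw [Finset.eq_empty_iff_forall_notMem]
      intro pq hpq
      simp only [Bp, mem_filter, mem_product] at hpq
      have h1 := pq.1.isLt
      have h2 := pq.2.isLt
      have h3 : pq.1.val < pq.2.val := hpq.2.1
      omega
    refine ⟨hset R a, ∅, hset_hitting R a, ⟨by simp, by simp⟩, ?_⟩
    have := hset_card_le R a
    rw [hA, hB] at ha this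
    simp only [Finset.card_empty] at ha this
    omega
  · push_neg at hk2
    have hk0 : 0 < R.k := by omega
    have ha0 : 1 ≤ a := by
      by_contra h
      have ha' : a = 0 := by omega
      have hA : Ap R a = ∅ := by
        rw [Finset.eq_empty_iff_forall_notMem]
        intro pq hpq
        simp only [Ap, mem_filter, mem_product] at hpq
        have := hpq.2.2
        omega
      rw [hA] at ha
      simp only [Finset.card_empty, Nat.le_zero, Nat.add_eq_zero] at ha
      have hmem : ((⟨0, hk0⟩ : Fin R.k), (⟨1, hk2⟩ : Fin R.k)) ∈ Bp R a := by
        simp only [Bp, mem_filter, mem_product, mem_univ, and_self, true_and]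
        exact ⟨by simp [Fin.lt_def], by omega⟩
      have := Finset.card_eq_zero.mp ha.1
      rw [this] at hmem
      exact absurd hmem (Finset.notMem_empty _)
    set N := min (NZ R a) a with hNdef
    have hNle : N ≤ NZ R a := min_le_left _ _
    have hNa : N ≤ a := min_le_right _ _
    refine ⟨hset R a, Pack R a N hk0, hset_hitting R a, Pack_isPacking R a N hk0 hNle, ?_⟩
    rw [Pack_card R a N hk0 hNle]
    have hHle := hset_card_le R a
    by_cases hbig : a ≤ NZ R a
    · -- full colouring available
      have hNa' : N = a := by omega
      have hQ : Qset R a N = Ap R a := by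
        unfold Qset
        apply Finset.filter_true_of_mem
        intro pq hpq
        have := cIdx_lt a (by omega) pq
        omega
      rw [hQ]
      omega
    · push_neg at hbig
      -- NZ = a - 1
      have hNZ1 : a - 1 ≤ NZ R a := by
        by_contra hcon
        push_neg at hcon
        have hfail := Nat.find_min hex (show a - 1 < a by omega)
        apply hfail
        have e1 : R.k - (a-1) = (R.k - a) + 1 := by omega
        have hBle : (Bp R (a-1)).card ≤ pc ((R.k - a) + 1) := by
          have := Bp_card_le R (a-1)
          rwa [e1] at this
        have hCle : (Cp R (a-1)).card ≤ ((R.k - a) + 1) * (Jset R a).card := by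
          have h1 := Cp_card_le R (a-1)
          have h2 : (univ : Finset (Fin R.s)).filter (fun j => (a-1) + 1 ≤ deg R j) = Jset R a := by
            unfold Jset
            apply Finset.filter_congr
            intro j _
            constructor <;> intro <;> omega
          rw [h2, e1] at h1
          exact h1
        have hsum : pc ((R.k - a) + 1) + ((R.k - a) + 1) * (Jset R a).card
            ≤ pc (((R.k - a) + 1) + (Jset R a).card) := pc_add _ _
        have hmono : pc (((R.k - a) + 1) + (Jset R a).card) ≤ pc (a - 1) := by
          apply pc_mono
          have : NZ R a = (R.k - a) + (Jset R a).card := rfl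
          omega
        have hApc : (Ap R (a-1)).card = pc (a-1) := Ap_card R (a-1) (by omega)
        omega
      have hNZ : NZ R a = a - 1 := by omega
      have hNval : N = a - 1 := by omega
      -- split Ap by colour index
      have hsplit0 := Finset.card_filter_add_card_filter_not
        (s := Ap R a) (p := fun pq => cIdx a pq < N)
      have hsplit : (Qset R a N).card + ((Ap R a).filter (fun pq => ¬ cIdx a pq < N)).card
          = (Ap R a).card := by
        unfold Qset
        simpa using hsplit0
      have hcls : ((Ap R a).filter (fun pq => ¬ cIdx a pq < N)).card ≤ (a-1)/2 := by
        have hsub : ((Ap R a).filter (fun pq => ¬ cIdx a pq < N)).card ≤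
            (Finset.Icc 1 ((a-1)/2)).card := by
          apply Finset.card_le_card_of_injOn (fun pq => pq.1.val)
          · intro pq hpq
            simp only [mem_coe, mem_filter, Ap, mem_product] at hpq
            obtain ⟨⟨_, hlt, hqa⟩, hcidx⟩ := hpq
            have hplt : pq.1.val < pq.2.val := hlt
            -- colour index is a-1, so residue is 0
            have hres0 : (pq.1.val + pq.2.val) % a = 0 := by
              by_contra hres
              unfold cIdx at hcidx
              rw [if_neg hres] at hcidx
              have := Nat.mod_lt (pq.1.val + pq.2.val) (show 0 < a by omega)
              omega
            obtain ⟨t, ht⟩ := Nat.dvd_of_mod_eq_zero hres0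
            have ht1 : t = 1 := by
              rcases Nat.lt_or_ge t 1 with h | h
              · interval_cases t
                omega
              · rcases Nat.lt_or_ge t 2 with h' | h'
                · omega
                · exfalso
                  have : a * 2 ≤ a * t := Nat.mul_le_mul_left a h'
                  omega
            rw [ht1, Nat.mul_one] at ht
            simp only [mem_coe, Finset.mem_Icc]
            omega
          · intro pq hpq pq' hpq' hEq
            simp only [mem_coe, mem_filter, Ap, mem_product] at hpq hpq'
            obtain ⟨⟨_, hlt, hqa⟩, hcidx⟩ := hpq
            obtain ⟨⟨_, hlt', hqa'⟩, hcidx'⟩ := hpq'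
            have hplt : pq.1.val < pq.2.val := hlt
            have hplt' : pq'.1.val < pq'.2.val := hlt'
            have hres0 : (pq.1.val + pq.2.val) % a = 0 := by
              by_contra hres
              unfold cIdx at hcidx
              rw [if_neg hres] at hcidx
              have := Nat.mod_lt (pq.1.val + pq.2.val) (show 0 < a by omega)
              omega
            have hres0' : (pq'.1.val + pq'.2.val) % a = 0 := by
              by_contra hres
              unfold cIdx at hcidx'
              rw [if_neg hres] at hcidx'
              have := Nat.mod_lt (pq'.1.val + pq'.2.val) (show 0 < a by omega)
              omega
            obtain ⟨t, ht⟩ := Nat.dvd_of_mod_eq_zero hres0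
            obtain ⟨t', ht'⟩ := Nat.dvd_of_mod_eq_zero hres0'
            have ht1 : t = 1 := by
              rcases Nat.lt_or_ge t 1 with h | h
              · interval_cases t; omega
              · rcases Nat.lt_or_ge t 2 with h' | h'
                · omega
                · exfalso
                  have : a * 2 ≤ a * t := Nat.mul_le_mul_left a h'
                  omega
            have ht1' : t' = 1 := by
              rcases Nat.lt_or_ge t' 1 with h | h
              · interval_cases t'; omega
              · rcases Nat.lt_or_ge t' 2 with h' | h'
                · omega
                · exfalso
                  have : a * 2 ≤ a * t' := Nat.mul_le_mul_left a h'
                  omega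
            rw [ht1, Nat.mul_one] at ht
            rw [ht1', Nat.mul_one] at ht'
            have hEq' : pq.1.val = pq'.1.val := hEq
            exact Prod.ext (Fin.ext hEq') (Fin.ext (by omega))
        rwa [Nat.card_Icc, show (a-1)/2 + 1 - 1 = (a-1)/2 by omega] at hsub
      have hApc : (Ap R a).card = pc a := Ap_card R a hak
      have hpcsucc : pc a = pc (a-1) + (a-1) := by
        have e : a = (a-1) + 1 := by omega
        rw [e, pc_succ]
        simp
      have hBC : (Bp R a).card + (Cp R a).card ≤ pc (a-1) := by
        have hBle := Bp_card_le R a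
        have hCle : (Cp R a).card ≤ (R.k - a) * (Jset R a).card := by
          have h1 := Cp_card_le R a
          have h2 : ((univ : Finset (Fin R.s)).filter (fun j => a + 1 ≤ deg R j)).card
              ≤ (Jset R a).card := by
            apply Finset.card_le_card
            unfold Jset
            apply Finset.monotone_filter_right
            intro j hj
            omega
          calc (Cp R a).card ≤ _ := h1
            _ ≤ (R.k - a) * (Jset R a).card := Nat.mul_le_mul_left _ h2
        have hsum := pc_add (R.k - a) ((Jset R a).card)
        have hmono : pc ((R.k - a) + (Jset R a).card) = pc (a-1) := by
          have : NZ R a = (R.k - a) + (Jset R a).card := rfl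
          rw [← this, hNZ]
        omega
      have h2div : 2 * ((a-1)/2) ≤ a - 1 := by omega
      omega

end TuzaAux

/-- Tuza's conjecture holds for threshold graphs: `τ(G) ≤ 2 μ(G)`. -/
theorem tuza_threshold {V : Type*} [Fintype V] [DecidableEq V]
    (G : SimpleGraph V) [DecidableRel G.Adj]
    (h : Nonempty (ThresholdRep G)) :
    triTau G ≤ 2 * triMu G := by
  obtain ⟨R⟩ := h
  obtain ⟨H, P, hH, hP, hcard⟩ := TuzaAux.exists_good R
  have h1 : triTau G ≤ H.card := Nat.sInf_le ⟨H, hH, rfl⟩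
  have h2 : P.card ≤ triMu G := by
    apply le_csSup
    · refine ⟨Fintype.card (Finset V), ?_⟩
      rintro n ⟨P', hP', rfl⟩
      simpa using Finset.card_le_univ P'
    · exact ⟨P, hP, rfl⟩
  omega
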